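/- arXiv:2406.19775 — 3 statements merged into one kernel-verified Lean document; each statement's English description precedes it below -/
import Mathlib

section
/- Under the assumptions 0 < α < β and 0 < γ < δ, the critical point C = (γ(α−β)/D, α(γ−δ)/D) with D = αγ − βδ lies in the open triangle {(x,y) : 0 < x, 0 < y, x + y < 1}. -/
theorem stmt_2 (α β γ δ : ℝ) (hα : 0 < α) (hαβ : α < β) (hγ : 0 < γ) (hγδ : γ < δ) :
    0 < γ * (α - β) / (α * γ - β * δ) ∧
    0 < α * (γ - δ) / (α * γ - β * δ) ∧
    γ * (α - β) / (α * γ - β * δ) + α * (γ - δ) / (α * γ - β * δ) < 1 := by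
  have hD : α * γ - β * δ < 0 := by nlinarith
  refine ⟨div_pos_of_neg_of_neg (by nlinarith) hD, div_pos_of_neg_of_neg (by nlinarith) hD, ?_⟩
  rw [← add_div, div_lt_one_of_neg hD]
  nlinarith
end

section
/- Along the line g_y : y = 1 − (δ/γ)x at points strictly above g_x (i.e., with βy > α(1−x)) and with x > 0, any solution of the system satisfies ẏ = 0 and ẋ < 0; hence the velocity vector cannot satisfy δẋ + γẏ > 0, so trajectories cannot cross from sector II into sector I through g_y. -/
theorem stmt_7 (α β γ δ x y : ℝ) (hα : 0 < α) (hβ : 0 < β) (hγ : 0 < γ) (hδ : 0 < δ)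
    (hαβ : α < β) (hγδ : γ < δ)
    (hgy : y = 1 - (δ / γ) * x) (habove : β * y > α * (1 - x)) (hx : 0 < x) :
    γ * y * (1 - y) - δ * x * y = 0 ∧
    α * x * (1 - x) - β * x * y < 0 ∧
    ¬ (δ * (α * x * (1 - x) - β * x * y) + γ * (γ * y * (1 - y) - δ * x * y) > 0) := by
  have hydot : γ * y * (1 - y) - δ * x * y = 0 := by
    subst hgy; field_simp; ring
  have hxdot : α * x * (1 - x) - β * x * y < 0 := by
    have : α * x * (1 - x) - β * x * y = x * (α * (1 - x) - β * y) := by ring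
    rw [this]
    exact mul_neg_of_pos_of_neg hx (by linarith)
  refine ⟨hydot, hxdot, ?_⟩
  rw [hydot]
  nlinarith
end

section
/- The system ẋ = αx(1−x) − βxy, ẏ = γy(1−y) − δxy with α, β, γ, δ > 0, α < β, γ < δ admits no nontrivial periodic orbit contained in the open triangle {0 < x, 0 < y, x + y < 1}. -/
open Set Function

theorem stmt_11 (α β γ δ : ℝ) (hα : 0 < α) (hβ : 0 < β) (hγ : 0 < γ) (hδ : 0 < δ)
    (hαβ : α < β) (hγδ : γ < δ) :
    ¬ ∃ (x y : ℝ → ℝ) (T : ℝ), 0 < T ∧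
      (∀ t, HasDerivAt x (α * x t * (1 - x t) - β * x t * y t) t) ∧
      (∀ t, HasDerivAt y (γ * y t * (1 - y t) - δ * x t * y t) t) ∧
      (∀ t, x (t + T) = x t ∧ y (t + T) = y t) ∧
      (∀ t, 0 < x t ∧ 0 < y t ∧ x t + y t < 1) ∧
      (∃ t₁ t₂ : ℝ, (x t₁, y t₁) ≠ (x t₂, y t₂)) := by
  rintro ⟨x, y, T, hT, hx, hy, hper, hpos, t₁, t₂, hne⟩
  have hxc : Continuous x := continuous_iff_continuousAt.2 fun t => (hx t).continuousAt
  have hyc : Continuous y := continuous_iff_continuousAt.2 fun t => (hy t).continuousAt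
  set p : ℝ → ℝ := fun t => α * x t * (1 - x t) - β * x t * y t with hpdef
  set q : ℝ → ℝ := fun t => γ * y t * (1 - y t) - δ * x t * y t with hqdef
  have hxp : ∀ t, HasDerivAt x (p t) t := fun t => hx t
  have hyq : ∀ t, HasDerivAt y (q t) t := fun t => hy t
  have hpc : Continuous p := by fun_prop
  have hqc : Continuous q := by fun_prop
  -- derivatives of p and q
  have hp' : ∀ t, HasDerivAt p ((α * (1 - 2 * x t) - β * y t) * p t + (-(β * x t)) * q t) t := by
    intro t
    have h := ((HasDerivAt.const_mul α (hxp t)).mul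
        ((hasDerivAt_const t (1 : ℝ)).sub (hxp t))).sub
      ((HasDerivAt.const_mul β (hxp t)).mul (hyq t))
    refine h.congr_deriv ?_
    simp only [hpdef, hqdef, Pi.sub_apply]
    ring
  have hq' : ∀ t, HasDerivAt q ((γ * (1 - 2 * y t) - δ * x t) * q t + (-(δ * y t)) * p t) t := by
    intro t
    have h := ((HasDerivAt.const_mul γ (hyq t)).mul
        ((hasDerivAt_const t (1 : ℝ)).sub (hyq t))).sub
      ((HasDerivAt.const_mul δ (hxp t)).mul (hyq t))
    refine h.congr_deriv ?_
    simp only [hpdef, hqdef, Pi.sub_apply]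
    ring
  -- the divergence-like coefficient
  set ad : ℝ → ℝ := fun t => (α * (1 - 2 * x t) - β * y t) + (γ * (1 - 2 * y t) - δ * x t)
    with haddef
  have hadc : Continuous ad := by fun_prop
  set A : ℝ → ℝ := fun t => ∫ s in (0:ℝ)..t, ad s with hAdef
  have hA : ∀ t, HasDerivAt A (ad t) t := fun t =>
    intervalIntegral.integral_hasDerivAt_right (hadc.intervalIntegrable 0 t)
      (hadc.stronglyMeasurableAtFilter _ _) hadc.continuousAt
  -- w = p * q and φ = w * exp (-A)
  set w : ℝ → ℝ := fun t => p t * q t with hwdef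
  have hw' : ∀ t, HasDerivAt w
      (ad t * w t + (-(β * x t)) * q t ^ 2 + (-(δ * y t)) * p t ^ 2) t := by
    intro t
    have h := (hp' t).mul (hq' t)
    refine h.congr_deriv ?_
    simp only [hwdef, haddef]
    ring
  set φ : ℝ → ℝ := fun t => w t * Real.exp (-A t) with hφdef
  have hφ' : ∀ t, HasDerivAt φ
      (((-(β * x t)) * q t ^ 2 + (-(δ * y t)) * p t ^ 2) * Real.exp (-A t)) t := by
    intro t
    have h := (hw' t).mul ((hA t).neg.exp)
    refine h.congr_deriv ?_
    simp only [hwdef, hφdef, Pi.neg_apply]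
    ring
  have hφ'nonpos : ∀ t, ((-(β * x t)) * q t ^ 2 + (-(δ * y t)) * p t ^ 2) * Real.exp (-A t) ≤ 0 := by
    intro t
    have h1 : 0 < β * x t := mul_pos hβ (hpos t).1
    have h2 : 0 < δ * y t := mul_pos hδ (hpos t).2.1
    have h3 : (0:ℝ) < Real.exp (-A t) := Real.exp_pos _
    have ha : -(β * x t) * q t ^ 2 ≤ 0 :=
      mul_nonpos_of_nonpos_of_nonneg (by linarith) (sq_nonneg _)
    have hb : -(δ * y t) * p t ^ 2 ≤ 0 :=
      mul_nonpos_of_nonpos_of_nonneg (by linarith) (sq_nonneg _)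
    exact mul_nonpos_of_nonpos_of_nonneg (by linarith) h3.le
  have hφdiff : Differentiable ℝ φ := fun t => (hφ' t).differentiableAt
  have hφanti : Antitone φ := by
    apply antitone_of_deriv_nonpos hφdiff
    intro t
    rw [(hφ' t).deriv]
    exact hφ'nonpos t
  -- periodicity
  have hxT : Function.Periodic x T := fun t => (hper t).1
  have hyT : Function.Periodic y T := fun t => (hper t).2
  have hpT : Function.Periodic p T := fun t => by simp only [hpdef, hxT t, hyT t]
  have hqT : Function.Periodic q T := fun t => by simp only [hqdef, hxT t, hyT t]
  -- a global maximum point of x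
  obtain ⟨t1, ht1mem, hmax⟩ := isCompact_Icc.exists_isMaxOn (α := ℝ)
    (nonempty_Icc.2 hT.le) hxc.continuousOn
  have hglob : ∀ t, x t ≤ x t1 := by
    intro t
    obtain ⟨s, hs, hxs⟩ := hxT.exists_mem_Ico₀ hT t
    rw [hxs]
    exact hmax (Ico_subset_Icc_self hs)
  have hlocmax : IsLocalMax x t1 :=
    IsMaxOn.isLocalMax (fun t _ => hglob t) Filter.univ_mem
  have hpt1 : p t1 = 0 := hlocmax.hasDerivAt_eq_zero (hxp t1)
  -- φ vanishes at t1 and t1 + T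
  have hφt1 : φ t1 = 0 := by simp [hφdef, hwdef, hpt1]
  have hφt1T : φ (t1 + T) = 0 := by
    simp only [hφdef, hwdef, hpT t1, hpt1]
    ring
  -- hence φ vanishes on the whole interval
  have hφzero : ∀ s ∈ Ioo t1 (t1 + T), φ s = 0 := by
    intro s hs
    have h1 : φ s ≤ 0 := hφt1 ▸ hφanti hs.1.le
    have h2 : 0 ≤ φ s := hφt1T ▸ hφanti hs.2.le
    linarith
  -- so p and q vanish on the open interval
  have hpq0 : ∀ s ∈ Ioo t1 (t1 + T), p s = 0 ∧ q s = 0 := by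
    intro s hs
    have hev : φ =ᶠ[nhds s] (fun _ => (0:ℝ)) :=
      Filter.eventually_of_mem (Ioo_mem_nhds hs.1 hs.2) hφzero
    have hd0 : HasDerivAt φ 0 s :=
      (hasDerivAt_const s (0:ℝ)).congr_of_eventuallyEq hev
    have huniq : ((-(β * x s)) * q s ^ 2 + (-(δ * y s)) * p s ^ 2) * Real.exp (-A s) = 0 :=
      (hφ' s).unique hd0
    have hexp : Real.exp (-A s) ≠ 0 := (Real.exp_pos _).ne'
    have hsum : β * x s * q s ^ 2 + δ * y s * p s ^ 2 = 0 := by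
      rcases mul_eq_zero.mp huniq with h | h
      · linarith
      · exact absurd h hexp
    have h1 : 0 < β * x s := mul_pos hβ (hpos s).1
    have h2 : 0 < δ * y s := mul_pos hδ (hpos s).2.1
    have hq2 : q s ^ 2 = 0 := by nlinarith [sq_nonneg (p s), sq_nonneg (q s)]
    have hp2 : p s ^ 2 = 0 := by nlinarith [sq_nonneg (p s), sq_nonneg (q s)]
    exact ⟨pow_eq_zero_iff (n := 2) (by norm_num) |>.mp hp2,
      pow_eq_zero_iff (n := 2) (by norm_num) |>.mp hq2⟩
  -- extend to the closed interval by continuity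
  have hIccne : t1 ≠ t1 + T := by linarith
  have hpIcc : Set.EqOn p (fun _ => (0:ℝ)) (Icc t1 (t1 + T)) := by
    have h1 : Set.EqOn p (fun _ => (0:ℝ)) (Ioo t1 (t1 + T)) := fun s hs => (hpq0 s hs).1
    have := h1.closure hpc continuous_const
    rwa [closure_Ioo hIccne] at this
  have hqIcc : Set.EqOn q (fun _ => (0:ℝ)) (Icc t1 (t1 + T)) := by
    have h1 : Set.EqOn q (fun _ => (0:ℝ)) (Ioo t1 (t1 + T)) := fun s hs => (hpq0 s hs).2
    have := h1.closure hqc continuous_const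
    rwa [closure_Ioo hIccne] at this
  -- p and q vanish everywhere by periodicity
  have hpall : ∀ t, p t = 0 := by
    intro t
    obtain ⟨s, hs, hps⟩ := hpT.exists_mem_Ico hT t t1
    rw [hps]
    exact hpIcc (Ico_subset_Icc_self hs)
  have hqall : ∀ t, q t = 0 := by
    intro t
    obtain ⟨s, hs, hqs⟩ := hqT.exists_mem_Ico hT t t1
    rw [hqs]
    exact hqIcc (Ico_subset_Icc_self hs)
  -- so x and y are constant
  have hxconst : x t₁ = x t₂ :=
    is_const_of_deriv_eq_zero (fun t => (hxp t).differentiableAt)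
      (fun t => by rw [(hxp t).deriv]; exact hpall t) t₁ t₂
  have hyconst : y t₁ = y t₂ :=
    is_const_of_deriv_eq_zero (fun t => (hyq t).differentiableAt)
      (fun t => by rw [(hyq t).deriv]; exact hqall t) t₁ t₂
  exact hne (by rw [hxconst, hyconst])
end
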